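/- Let A be an n×n complex matrix such that every eigenvalue μ ∈ spectrum ℂ A satisfies Re μ ≠ 0, let U be a unitary n×n matrix, let η ∈ {1, −1}, and suppose A = η • (U ⬝ Aᵀ ⬝ Uᴴ). Let F be a spectral sign of A, i.e. F⬝A = A⬝F, F⬝F = 1, and for every eigenvalue μ ∈ spectrum ℂ A and every v ∈ ℂⁿ with ((A − μ•1)^n) *ᵥ v = 0 one has F *ᵥ v = v if Re μ > 0 and F *ᵥ v = −v if Re μ < 0. Then F = η • (U ⬝ Fᵀ ⬝ Uᴴ). -/
import Mathlib

open Matrix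

namespace Stmt12Aux

open Polynomial Module

lemma mem_max {n : ℕ} (A : Matrix (Fin n) (Fin n) ℂ) (μ : ℂ) (v : Fin n → ℂ)
    (hv : v ∈ Module.End.maxGenEigenspace (Matrix.toLinAlgEquiv' A) μ) :
    ((A - μ • 1) ^ n) *ᵥ v = 0 := by
  rw [Module.End.maxGenEigenspace_eq_genEigenspace_finrank, Module.End.mem_genEigenspace_nat,
    LinearMap.mem_ker] at hv
  have hn : finrank ℂ (Fin n → ℂ) = n := by simp
  rw [hn] at hv
  have e : (Matrix.toLinAlgEquiv' A - μ • 1) ^ n = Matrix.toLinAlgEquiv' ((A - μ • 1) ^ n) := by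
    rw [map_pow, map_sub]
    congr 1
    rw [_root_.map_smul, _root_.map_one]
  rw [e, Matrix.toLinAlgEquiv'_apply] at hv
  exact hv

/-- generalized eigenvectors span: a submodule containing all of them is everything -/
lemma span_lemma {n : ℕ} (A : Matrix (Fin n) (Fin n) ℂ) (p : Submodule ℂ (Fin n → ℂ))
    (h : ∀ μ : ℂ, ∀ v, ((A - μ • 1) ^ n) *ᵥ v = 0 → v ∈ p) (v : Fin n → ℂ) : v ∈ p := by
  have htop := Module.End.iSup_maxGenEigenspace_eq_top (K := ℂ) (V := Fin n → ℂ)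
    (Matrix.toLinAlgEquiv' A)
  have hle : (⨆ μ : ℂ, Module.End.maxGenEigenspace (Matrix.toLinAlgEquiv' A) μ) ≤ p :=
    iSup_le fun μ x hx => h μ x (mem_max A μ x hx)
  exact hle (htop ▸ Submodule.mem_top : v ∈ _)

lemma spec_lemma {n : ℕ} (A : Matrix (Fin n) (Fin n) ℂ) {μ : ℂ} {v : Fin n → ℂ}
    (hv : ((A - μ • 1) ^ n) *ᵥ v = 0) (h0 : v ≠ 0) : μ ∈ spectrum ℂ A := by
  rw [spectrum.mem_iff]
  intro h
  have h1 : IsUnit (A - μ • 1) := by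
    have := h.neg
    rwa [neg_sub, Algebra.algebraMap_eq_smul_one] at this
  obtain ⟨B, hB⟩ := (h1.pow n).exists_left_inv
  apply h0
  calc v = (B * ((A - μ • 1) ^ n)) *ᵥ v := by rw [hB, one_mulVec]
    _ = B *ᵥ (((A - μ • 1) ^ n) *ᵥ v) := by rw [mulVec_mulVec]
    _ = 0 := by rw [hv, mulVec_zero]

lemma pair_lemma {n : ℕ} (A : Matrix (Fin n) (Fin n) ℂ) {μ ν : ℂ} (hμν : μ ≠ ν)
    {w v : Fin n → ℂ} (hw : w ᵥ* ((A - ν • 1) ^ n) = 0)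
    (hv : ((A - μ • 1) ^ n) *ᵥ v = 0) : w ⬝ᵥ v = 0 := by
  have hcop : IsCoprime ((X - C ν) ^ n) ((X - C μ) ^ n) :=
    (isCoprime_X_sub_C_of_isUnit_sub ((sub_ne_zero_of_ne (Ne.symm hμν)).isUnit)).pow
  obtain ⟨p, q, hpq⟩ := hcop
  have haev : ∀ ξ : ℂ, aeval A ((X - C ξ) ^ n) = (A - ξ • 1) ^ n := by
    intro ξ
    rw [map_pow, map_sub, aeval_X, aeval_C, Algebra.algebraMap_eq_smul_one]
  have hA1 : aeval A p * (A - ν • 1) ^ n + aeval A q * (A - μ • 1) ^ n = 1 := by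
    have := congrArg (aeval A) hpq
    simpa [map_add, _root_.map_mul, haev] using this
  have hc : aeval A p * (A - ν • 1) ^ n = (A - ν • 1) ^ n * aeval A p := by
    have := ((Commute.all ((X - C ν) ^ n) p).map (aeval A)).eq
    rw [haev] at this
    exact this.symm
  calc w ⬝ᵥ v = w ⬝ᵥ ((aeval A p * (A - ν • 1) ^ n + aeval A q * (A - μ • 1) ^ n) *ᵥ v) := by
        rw [hA1, one_mulVec]
    _ = w ⬝ᵥ (((A - ν • 1) ^ n) *ᵥ (aeval A p *ᵥ v)) + w ⬝ᵥ (aeval A q *ᵥ (((A - μ • 1) ^ n) *ᵥ v)) := by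
        rw [add_mulVec, hc, dotProduct_add, mulVec_mulVec, mulVec_mulVec]
    _ = 0 := by
        rw [dotProduct_mulVec, hw, zero_dotProduct, hv, mulVec_zero, dotProduct_zero, add_zero]

lemma transpose_lemma {n : ℕ} (A F : Matrix (Fin n) (Fin n) ℂ)
    (hA : ∀ μ ∈ spectrum ℂ A, μ.re ≠ 0)
    (hF : ∀ μ ∈ spectrum ℂ A, ∀ v : Fin n → ℂ, ((A - μ • 1) ^ n) *ᵥ v = 0 →
      (0 < μ.re → F *ᵥ v = v) ∧ (μ.re < 0 → F *ᵥ v = -v))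
    {ν : ℂ} (hν : ν.re ≠ 0)
    {w : Fin n → ℂ} (hw : w ᵥ* ((A - ν • 1) ^ n) = 0) :
    Fᵀ *ᵥ w = (if 0 < ν.re then (1 : ℂ) else -1) • w := by
  set s : ℂ := if 0 < ν.re then (1 : ℂ) else -1 with hs
  have key : ∀ v : Fin n → ℂ, w ⬝ᵥ (F *ᵥ v) = s * (w ⬝ᵥ v) := by
    set p : Submodule ℂ (Fin n → ℂ) :=
      { carrier := {v | w ⬝ᵥ (F *ᵥ v) = s * (w ⬝ᵥ v)}
        add_mem' := by
          intro a b ha hb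
          simp only [Set.mem_setOf_eq, mulVec_add, dotProduct_add] at *
          rw [ha, hb, mul_add]
        zero_mem' := by simp
        smul_mem' := by
          intro c a ha
          simp only [Set.mem_setOf_eq, mulVec_smul, dotProduct_smul, smul_eq_mul] at *
          rw [ha]; ring } with hp
    intro v
    refine span_lemma A p ?_ v
    intro μ u hu
    by_cases hu0 : u = 0
    · simp [hp, hu0]
    have hμspec := spec_lemma A hu hu0
    have hre := hA μ hμspec
    show w ⬝ᵥ (F *ᵥ u) = s * (w ⬝ᵥ u)
    by_cases hμν : μ = ν
    · subst hμν
      rcases lt_or_gt_of_ne hre with hlt | hgt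
      · have hFu := (hF μ hμspec u hu).2 hlt
        rw [hFu, hs, if_neg (by linarith)]
        simp
      · have hFu := (hF μ hμspec u hu).1 hgt
        rw [hFu, hs, if_pos hgt, one_mul]
    · have hz : w ⬝ᵥ u = 0 := pair_lemma A hμν hw hu
      rcases lt_or_gt_of_ne hre with hlt | hgt
      · rw [(hF μ hμspec u hu).2 hlt, hz, dotProduct_neg, hz, neg_zero, mul_zero]
      · rw [(hF μ hμspec u hu).1 hgt, hz, mul_zero]
  funext i
  have hk := key (Pi.single i 1)
  have h1 : w ⬝ᵥ (F *ᵥ Pi.single i 1) = (Fᵀ *ᵥ w) i := by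
    simp [dotProduct, mulVec, Matrix.transpose_apply, Pi.single_apply, Finset.mul_sum,
      mul_comm]
  have h2 : w ⬝ᵥ Pi.single i 1 = w i := by simp [dotProduct, Pi.single_apply]
  rw [h1, h2] at hk
  simpa using hk

lemma conj_pow {n : ℕ} (U M : Matrix (Fin n) (Fin n) ℂ) (hU1 : Uᴴ * U = 1)
    (hU2 : U * Uᴴ = 1) (k : ℕ) :
    (Uᴴ * M * U) ^ k = Uᴴ * M ^ k * U := by
  induction k with
  | zero => simpa using hU1.symm
  | succ k ih =>
      rw [pow_succ, ih, pow_succ]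
      calc Uᴴ * M ^ k * U * (Uᴴ * M * U)
          = Uᴴ * M ^ k * ((U * Uᴴ) * (M * U)) := by simp only [Matrix.mul_assoc]
        _ = Uᴴ * M ^ k * (M * U) := by rw [hU2, Matrix.one_mul]
        _ = Uᴴ * (M ^ k * M) * U := by simp only [Matrix.mul_assoc]

end Stmt12Aux

open Stmt12Aux in
theorem stmt_12 {n : ℕ} (A U F : Matrix (Fin n) (Fin n) ℂ) (η : ℂ)
    (hA : ∀ μ ∈ spectrum ℂ A, μ.re ≠ 0)
    (hU : U ∈ Matrix.unitaryGroup (Fin n) ℂ)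
    (hη : η = 1 ∨ η = -1)
    (hsym : A = η • (U * Aᵀ * Uᴴ))
    (hFA : F * A = A * F) (hFF : F * F = 1)
    (hF : ∀ μ ∈ spectrum ℂ A, ∀ v : Fin n → ℂ, ((A - μ • 1) ^ n) *ᵥ v = 0 →
      (0 < μ.re → F *ᵥ v = v) ∧ (μ.re < 0 → F *ᵥ v = -v)) :
    F = η • (U * Fᵀ * Uᴴ) := by
  have hU1 : Uᴴ * U = 1 := by
    simpa [Matrix.star_eq_conjTranspose] using hU.1
  have hU2 : U * Uᴴ = 1 := by
    simpa [Matrix.star_eq_conjTranspose] using hU.2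
  have hη2 : η * η = 1 := by rcases hη with h | h <;> simp [h]
  have hAT : Aᵀ = η • (Uᴴ * A * U) := by
    have h1 : Uᴴ * A * U = η • Aᵀ := by
      conv_lhs => rw [hsym]
      rw [Matrix.mul_smul, Matrix.smul_mul]
      congr 1
      calc Uᴴ * (U * Aᵀ * Uᴴ) * U = (Uᴴ * U) * (Aᵀ * (Uᴴ * U)) := by
            simp only [Matrix.mul_assoc]
        _ = Aᵀ := by rw [hU1, Matrix.one_mul, Matrix.mul_one]
    rw [h1, smul_smul, hη2, one_smul]
  have hconj : ∀ μ : ℂ, (Aᵀ - (η * μ) • 1) ^ n = η ^ n • (Uᴴ * ((A - μ • 1) ^ n) * U) := by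
    intro μ
    have hμ1 : Uᴴ * (μ • 1) * U = μ • (1 : Matrix (Fin n) (Fin n) ℂ) := by
      rw [Matrix.mul_smul, Matrix.mul_one, Matrix.smul_mul, hU1]
    have h0 : Aᵀ - (η * μ) • 1 = η • (Uᴴ * (A - μ • 1) * U) := by
      rw [Matrix.mul_sub, Matrix.sub_mul, hμ1, smul_sub, ← hAT, smul_smul]
    rw [h0, smul_pow, conj_pow U (A - μ • 1) hU1 hU2]
  have hmain : ∀ v, F *ᵥ v = (η • (U * Fᵀ * Uᴴ)) *ᵥ v := by
    set G : Matrix (Fin n) (Fin n) ℂ := η • (U * Fᵀ * Uᴴ) with hG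
    set p : Submodule ℂ (Fin n → ℂ) :=
      { carrier := {v | F *ᵥ v = G *ᵥ v}
        add_mem' := by
          intro a b ha hb
          simp only [Set.mem_setOf_eq, mulVec_add] at *
          rw [ha, hb]
        zero_mem' := by simp
        smul_mem' := by
          intro c a ha
          simp only [Set.mem_setOf_eq, mulVec_smul] at *
          rw [ha] } with hp
    intro v
    refine span_lemma A p ?_ v
    intro μ u hu
    by_cases hu0 : u = 0
    · simp [hp, hu0]
    have hμspec := spec_lemma A hu hu0
    have hre := hA μ hμspec
    show F *ᵥ u = G *ᵥ u
    set s : ℂ := if 0 < μ.re then (1 : ℂ) else -1 with hs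
    have hFu : F *ᵥ u = s • u := by
      rcases lt_or_gt_of_ne hre with h | h
      · rw [(hF μ hμspec u hu).2 h, hs, if_neg (by linarith)]
        simp
      · rw [(hF μ hμspec u hu).1 h, hs, if_pos h, one_smul]
    set w : Fin n → ℂ := Uᴴ *ᵥ u with hwdef
    have hUu : U *ᵥ w = u := by
      rw [hwdef, mulVec_mulVec, hU2, one_mulVec]
    have hw : w ᵥ* ((A - (η * μ) • 1) ^ n) = 0 := by
      rw [← Matrix.mulVec_transpose, Matrix.transpose_pow, Matrix.transpose_sub,
        Matrix.transpose_smul, Matrix.transpose_one, hconj μ, Matrix.smul_mulVec,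
        ← mulVec_mulVec, ← mulVec_mulVec, hUu, hu, mulVec_zero, smul_zero]
    have hν : (η * μ).re ≠ 0 := by
      rcases hη with h | h <;> simp [h, hre]
    have hFT := transpose_lemma A F hA hF hν hw
    have hss : η * (if 0 < (η * μ).re then (1 : ℂ) else -1) = s := by
      have hnegre : ((-1 : ℂ) * μ).re = -μ.re := by simp
      rcases hη with h | h
      · rw [h, one_mul, one_mul, hs]
      · rw [h]
        rcases lt_or_gt_of_ne hre with h2 | h2
        · rw [hs, if_pos (show 0 < ((-1 : ℂ) * μ).re by rw [hnegre]; linarith),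
            if_neg (show ¬ 0 < μ.re by linarith)]
          ring
        · rw [hs, if_neg (show ¬ 0 < ((-1 : ℂ) * μ).re by rw [hnegre]; linarith),
            if_pos h2]
          ring
    have hGu : G *ᵥ u = s • u := by
      rw [hG, Matrix.smul_mulVec, ← mulVec_mulVec, ← mulVec_mulVec, ← hwdef, hFT,
        mulVec_smul, hUu, smul_smul, hss]
    rw [hFu, hGu]
  ext i j
  have h := hmain (Pi.single j 1)
  rw [Matrix.mulVec_single_one, Matrix.mulVec_single_one] at h
  simpa using congrFun h i
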